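/- arXiv:2301.00583 — 2 statements merged into one kernel-verified Lean document; each statement's English description precedes it below -/
import Mathlib

section
/- Let a > 0 and f(γ) = ln(1+γ) − a·√(γ/(1+γ)) for γ ≥ 0. Then f(0) = 0 and there exists a unique γ⁰ > 0 with f(γ⁰) = 0; in particular f has exactly two roots on [0,∞). -/
open Set

private lemma g_deriv (a : ℝ) {x : ℝ} (hx : x ∈ Ioo (0:ℝ) 1) :
    HasDerivAt (fun t : ℝ => -Real.log (1 - t^2) - a*t) (2*x/(1-x^2) - a) x := by
  have hne : 1 - x^2 ≠ 0 := by nlinarith [hx.1, hx.2]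
  have h1 : HasDerivAt (fun t : ℝ => 1 - t^2) (-(2*x)) x := by
    have := (hasDerivAt_pow 2 x).const_sub 1
    simpa using this
  have h2 : HasDerivAt (fun t : ℝ => Real.log (1 - t^2)) (-(2*x)/(1-x^2)) x := h1.log hne
  have h3 : HasDerivAt (fun t : ℝ => a*t) a x := by
    simpa using (hasDerivAt_id x).const_mul a
  have := (h2.neg).sub h3
  refine this.congr_deriv ?_
  ring

private lemma g_cont (a : ℝ) :
    ContinuousOn (fun t : ℝ => -Real.log (1 - t^2) - a*t) (Ico (0:ℝ) 1) := by
  apply ContinuousOn.sub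
  · apply ContinuousOn.neg
    apply ContinuousOn.log
    · fun_prop
    · intro x hx
      simp only [mem_Ico] at hx
      nlinarith [hx.1, hx.2]
  · fun_prop

private lemma g_conv (a : ℝ) :
    StrictConvexOn ℝ (Ico (0:ℝ) 1) (fun t : ℝ => -Real.log (1 - t^2) - a*t) := by
  apply StrictMonoOn.strictConvexOn_of_deriv (convex_Ico 0 1) (g_cont a)
  rw [interior_Ico]
  intro x hx y hy hxy
  rw [(g_deriv a hx).deriv, (g_deriv a hy).deriv]
  have hx1 : (0:ℝ) < 1 - x^2 := by nlinarith [hx.1, hx.2]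
  have hy1 : (0:ℝ) < 1 - y^2 := by nlinarith [hy.1, hy.2]
  have : 2*x/(1-x^2) < 2*y/(1-y^2) := by
    rw [div_lt_div_iff₀ hx1 hy1]
    nlinarith [mul_pos (sub_pos.2 hxy) (mul_pos hx.1 hy.1), sub_pos.2 hxy]
  linarith

/-- a strictly convex function on [0,1) vanishing at 0 has at most one positive zero -/
private lemma g_two_roots (a : ℝ) {p q : ℝ} (hp : 0 < p) (hpq : p < q) (hq : q < 1)
    (hgp : -Real.log (1 - p^2) - a*p = 0) (hgq : -Real.log (1 - q^2) - a*q = 0) : False := by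
  have hconv := g_conv a
  have h0 : (0:ℝ) ∈ Ico (0:ℝ) 1 := ⟨le_rfl, one_pos⟩
  have hqmem : q ∈ Ico (0:ℝ) 1 := ⟨by linarith, hq⟩
  have hne : (0:ℝ) ≠ q := by linarith
  have hb : 0 < p/q := div_pos hp (hp.trans hpq)
  have hb1 : p/q < 1 := (div_lt_one (by linarith)).2 hpq
  have hab : (1 - p/q) + p/q = 1 := by ring
  have := hconv.2 h0 hqmem hne (by linarith : 0 < 1 - p/q) hb hab
  have hsum : (1 - p/q) • (0:ℝ) + (p/q) • q = p := by
    have hq0 : q ≠ 0 := (hp.trans hpq).ne'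
    simp only [smul_eq_mul, mul_zero, zero_add]
    field_simp
  rw [hsum] at this
  simp only [smul_eq_mul] at this
  have hg0 : -Real.log (1 - (0:ℝ)^2) - a*0 = 0 := by simp
  rw [hgp, hgq, hg0] at this
  simp at this

theorem stmt_4 (a : ℝ) (ha : 0 < a)
    (f : ℝ → ℝ) (hf : ∀ γ, f γ = Real.log (1 + γ) - a * Real.sqrt (γ / (1 + γ))) :
    f 0 = 0 ∧ ∃! γ0 : ℝ, 0 < γ0 ∧ f γ0 = 0 := by
  set g : ℝ → ℝ := fun t => -Real.log (1 - t^2) - a*t with hg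
  -- key correspondence: for γ ≥ 0, f γ = g (√(γ/(1+γ)))
  have hkey : ∀ γ : ℝ, 0 ≤ γ → f γ = g (Real.sqrt (γ / (1 + γ))) := by
    intro γ hγ
    have h1 : (0:ℝ) < 1 + γ := by linarith
    have hq : 0 ≤ γ / (1 + γ) := div_nonneg hγ h1.le
    have hsq : Real.sqrt (γ / (1 + γ)) ^ 2 = γ / (1 + γ) := Real.sq_sqrt hq
    have h2 : 1 - Real.sqrt (γ / (1 + γ)) ^ 2 = 1 / (1 + γ) := by
      rw [hsq]; field_simp; ring
    rw [hf, hg]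
    simp only [h2]
    rw [Real.log_div one_ne_zero h1.ne', Real.log_one]
    ring
  -- γ is recovered from t = √(γ/(1+γ)) via γ = t²/(1-t²)
  have hrec : ∀ γ : ℝ, 0 ≤ γ →
      γ = (Real.sqrt (γ / (1 + γ)))^2 / (1 - (Real.sqrt (γ / (1 + γ)))^2) := by
    intro γ hγ
    have h1 : (0:ℝ) < 1 + γ := by linarith
    have hsq : Real.sqrt (γ / (1 + γ)) ^ 2 = γ / (1 + γ) :=
      Real.sq_sqrt (div_nonneg hγ h1.le)
    rw [hsq]
    field_simp
    ring
  have hg0 : g 0 = 0 := by simp [hg]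
  have hf0 : f 0 = 0 := by rw [hkey 0 le_rfl]; simpa using hg0
  refine ⟨hf0, ?_⟩
  -- point s where g is negative
  obtain ⟨s, hs0, hs12, hgs⟩ : ∃ s : ℝ, 0 < s ∧ s ≤ 1/2 ∧ g s < 0 := by
    refine ⟨min (1/2) (a/4), lt_min (by norm_num) (by linarith), min_le_left _ _, ?_⟩
    set s := min (1/2) (a/4) with hsdef
    have hs0 : 0 < s := lt_min (by norm_num) (by linarith)
    have hs2 : s ≤ 1/2 := min_le_left _ _
    have hsa : s ≤ a/4 := min_le_right _ _
    have hden : (0:ℝ) < 1 - s^2 := by nlinarith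
    have hlog : -(s^2/(1-s^2)) ≤ Real.log (1 - s^2) := by
      have hlog2 : Real.log (1/(1-s^2)) ≤ 1/(1-s^2) - 1 :=
        Real.log_le_sub_one_of_pos (by positivity)
      have h3 : 1/(1-s^2) - 1 = s^2/(1-s^2) := by field_simp; ring
      rw [Real.log_div one_ne_zero hden.ne', Real.log_one] at hlog2
      linarith
    have hsq4 : s^2 ≤ 1/4 := by nlinarith
    have hfrac : s^2/(1-s^2) ≤ 2*s^2 := by
      rw [div_le_iff₀ hden]
      nlinarith [mul_nonneg (sq_nonneg s) (by nlinarith : (0:ℝ) ≤ 1 - 2*s^2)]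
    have h5 : g s ≤ s^2/(1-s^2) - a*s := by
      simp only [hg]
      linarith
    have h4 : 2*s^2 - a*s < 0 := by nlinarith
    exact lt_of_le_of_lt h5 (by linarith)
  -- point t where g is positive
  set ε : ℝ := Real.exp (-(a+1)) with hε
  have hε0 : 0 < ε := Real.exp_pos _
  have hε1 : ε < 1 := by
    rw [hε, Real.exp_lt_one_iff]; linarith
  set t : ℝ := Real.sqrt (1 - ε) with ht
  have ht2 : t^2 = 1 - ε := Real.sq_sqrt (by linarith)
  have ht1 : t < 1 := by
    have := Real.sqrt_lt_sqrt (by linarith : (0:ℝ) ≤ 1 - ε) (by linarith : 1 - ε < 1)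
    simpa [ht] using this
  have ht0 : 0 ≤ t := Real.sqrt_nonneg _
  have hgt : 0 < g t := by
    have h6 : g t = (a+1) - a*t := by
      simp only [hg]
      rw [ht2, show (1:ℝ) - (1 - ε) = ε by ring, hε, Real.log_exp]
      ring
    rw [h6]; nlinarith
  have hst : s < t := by
    by_contra h
    push_neg at h
    have h7 : t^2 ≤ (1/2)^2 := by nlinarith
    rw [ht2] at h7
    have h8 : 3/4 ≤ ε := by linarith
    have h9 : ε < 1/2 := by
      rw [hε]
      have h10 := Real.add_one_lt_exp (x := a+1) (by linarith)
      rw [Real.exp_neg, inv_lt_comm₀ (Real.exp_pos _) (by norm_num)]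
      have : (2:ℝ) < a + 1 + 1 := by linarith
      linarith
    linarith
  -- IVT on [s,t]
  have hsub : Icc s t ⊆ Ico (0:ℝ) 1 := fun x hx => ⟨le_trans hs0.le hx.1, lt_of_le_of_lt hx.2 ht1⟩
  have hcont : ContinuousOn g (Icc s t) := (g_cont a).mono hsub
  have hiv := intermediate_value_Icc hst.le hcont
  have h0mem : (0:ℝ) ∈ Icc (g s) (g t) := ⟨hgs.le, hgt.le⟩
  obtain ⟨t0, ht0mem, hgt0⟩ := hiv h0mem
  have ht0pos : 0 < t0 := lt_of_lt_of_le hs0 ht0mem.1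
  have ht0lt : t0 < 1 := lt_of_le_of_lt ht0mem.2 ht1
  -- the root γ0
  set γ0 : ℝ := t0^2 / (1 - t0^2) with hγ0
  have hden0 : (0:ℝ) < 1 - t0^2 := by nlinarith
  have hγ0pos : 0 < γ0 := by positivity
  have hγ0sqrt : Real.sqrt (γ0 / (1 + γ0)) = t0 := by
    have h11 : 1 + γ0 = 1 / (1 - t0^2) := by
      rw [hγ0]; field_simp; ring
    have h12 : γ0 / (1 + γ0) = t0^2 := by
      rw [h11, hγ0]
      field_simp
    rw [h12]
    exact Real.sqrt_sq ht0pos.le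
  have hfγ0 : f γ0 = 0 := by
    rw [hkey γ0 hγ0pos.le, hγ0sqrt, hgt0]
  refine ⟨γ0, ⟨hγ0pos, hfγ0⟩, ?_⟩
  -- uniqueness
  rintro y ⟨hy, hfy⟩
  set u : ℝ → ℝ := fun γ => Real.sqrt (γ / (1 + γ)) with hu
  have hy1 : (0:ℝ) < 1 + y := by linarith
  have huy0 : 0 < u y := by
    apply Real.sqrt_pos.2
    positivity
  have huy1 : u y < 1 := by
    have h13 : y / (1 + y) < 1 := by rw [div_lt_one hy1]; linarith
    have := Real.sqrt_lt_sqrt (by positivity : (0:ℝ) ≤ y / (1 + y)) h13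
    simpa [hu] using this
  have hgy : g (u y) = 0 := by
    rw [← hkey y hy.le, hfy]
  -- u y = t0, else g has two distinct positive roots
  have hut : u y = t0 := by
    rcases lt_trichotomy (u y) t0 with h | h | h
    · exact absurd (g_two_roots a huy0 h ht0lt (by simpa [hg] using hgy) (by simpa [hg] using hgt0)) id
    · exact h
    · exact absurd (g_two_roots a ht0pos h huy1 (by simpa [hg] using hgt0) (by simpa [hg] using hgy)) id
  have := hrec y hy.le
  rw [show Real.sqrt (y / (1 + y)) = u y from rfl, hut] at this
  rw [this, hγ0]
end

section
/- For all complex numbers x, x̄ and positive reals y, ȳ, ln(1 + |x|²/y) ≥ ln(1 + |x̄|²/ȳ) − |x̄|²/ȳ + 2·Re(conj(x̄)·x)/ȳ − (|x̄|²/ȳ)·(|x|² + y)/(|x̄|² + ȳ), with equality when x = x̄ and y = ȳ. -/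
theorem stmt_11 (x xb : ℂ) (y yb : ℝ) (hy : 0 < y) (hyb : 0 < yb) :
    Real.log (1 + ‖x‖ ^ 2 / y) ≥
      Real.log (1 + ‖xb‖ ^ 2 / yb) - ‖xb‖ ^ 2 / yb
        + 2 * (starRingEnd ℂ xb * x).re / yb
        - (‖xb‖ ^ 2 / yb) * ((‖x‖ ^ 2 + y) / (‖xb‖ ^ 2 + yb)) ∧
    (x = xb → y = yb →
      Real.log (1 + ‖x‖ ^ 2 / y) =
        Real.log (1 + ‖xb‖ ^ 2 / yb) - ‖xb‖ ^ 2 / yb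
          + 2 * (starRingEnd ℂ xb * x).re / yb
          - (‖xb‖ ^ 2 / yb) * ((‖x‖ ^ 2 + y) / (‖xb‖ ^ 2 + yb))) := by
  have hA : ‖x‖ ^ 2 = x.re ^ 2 + x.im ^ 2 := by
    rw [Complex.sq_norm, Complex.normSq_apply]; ring
  have hB : ‖xb‖ ^ 2 = xb.re ^ 2 + xb.im ^ 2 := by
    rw [Complex.sq_norm, Complex.normSq_apply]; ring
  have hR : (starRingEnd ℂ xb * x).re = xb.re * x.re + xb.im * x.im := by
    simp [Complex.mul_re]
  have hs : (0:ℝ) < ‖x‖ ^ 2 + y := by positivity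
  have hsb : (0:ℝ) < ‖xb‖ ^ 2 + yb := by positivity
  have h1pos : (0:ℝ) < 1 + ‖x‖ ^ 2 / y := by positivity
  have h2pos : (0:ℝ) < 1 + ‖xb‖ ^ 2 / yb := by positivity
  constructor
  · -- inequality part
    have h1 : Real.log (1 + ‖x‖ ^ 2 / y) ≥
        Real.log (1 + ‖xb‖ ^ 2 / yb) +
          (1 - (1 + ‖xb‖ ^ 2 / yb) / (1 + ‖x‖ ^ 2 / y)) := by
      have h := Real.log_le_sub_one_of_pos
        (show (0:ℝ) < (1 + ‖xb‖ ^ 2 / yb) / (1 + ‖x‖ ^ 2 / y) by positivity)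
      rw [Real.log_div h2pos.ne' h1pos.ne'] at h
      linarith
    have h2 : (1 - (1 + ‖xb‖ ^ 2 / yb) / (1 + ‖x‖ ^ 2 / y)) -
        (-(‖xb‖ ^ 2 / yb) + 2 * (starRingEnd ℂ xb * x).re / yb
          - (‖xb‖ ^ 2 / yb) * ((‖x‖ ^ 2 + y) / (‖xb‖ ^ 2 + yb)))
        = (((‖xb‖ ^ 2 + yb) * x.re - (‖x‖ ^ 2 + y) * xb.re) ^ 2
            + ((‖xb‖ ^ 2 + yb) * x.im - (‖x‖ ^ 2 + y) * xb.im) ^ 2)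
          / (yb * (‖x‖ ^ 2 + y) * (‖xb‖ ^ 2 + yb)) := by
      rw [hR]
      rw [hA, hB] at *
      field_simp
      ring
    have h3 : (0:ℝ) ≤ (((‖xb‖ ^ 2 + yb) * x.re - (‖x‖ ^ 2 + y) * xb.re) ^ 2
            + ((‖xb‖ ^ 2 + yb) * x.im - (‖x‖ ^ 2 + y) * xb.im) ^ 2)
          / (yb * (‖x‖ ^ 2 + y) * (‖xb‖ ^ 2 + yb)) := by positivity
    have h4 := h2 ▸ h3
    linarith
  · -- equality part
    intro hx hyy
    subst hx; subst hyy
    have hRB : (starRingEnd ℂ x * x).re = ‖x‖ ^ 2 := by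
      rw [hR, hB]; ring
    rw [hRB, div_self hsb.ne']
    ring
end
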